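/- Let D = (E, F) be a delta-matroid and e ∈ E of type pp (some minimum feasible set contains e and some maximum feasible set omits e). Then w(D^{*|e}) = w(D) + 2 and w(D^{×|e}) = w(D) + 1, where w denotes width. -/
import Mathlib


open Finset Polynomial

variable {α : Type*} [DecidableEq α]

/-- The twist of a collection of feasible sets with respect to `A`. -/
noncomputable def SS.twist (A : Finset α) (F : Finset (Finset α)) : Finset (Finset α) :=
  F.image (fun X => symmDiff A X)

/-- Loop complementation at a single element `e`. -/
noncomputable def SS.lc (e : α) (F : Finset (Finset α)) : Finset (Finset α) :=
  symmDiff F ((F.filter (fun X => e ∉ X)).image (insert e))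

/-- The two generating operations: twist `*` and loop complementation `×`. -/
inductive SS.Op | star | cross

/-- Apply a single operation at a single element. -/
noncomputable def SS.opElem : SS.Op → α → Finset (Finset α) → Finset (Finset α)
  | .star, e, F => SS.twist {e} F
  | .cross, e, F => SS.lc e F

/-- Apply a word in `{*, ×}` at a single element. -/
noncomputable def SS.wordElem (w : List SS.Op) (e : α) (F : Finset (Finset α)) : Finset (Finset α) :=
  w.foldl (fun F o => SS.opElem o e F) F

/-- Apply a word in `{*, ×}` elementwise on a subset `A`. -/
noncomputable def SS.wordOn (w : List SS.Op) (A : Finset α) (F : Finset (Finset α)) : Finset (Finset α) :=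
  A.toList.foldl (fun F e => SS.wordElem w e F) F

/-- Size of a largest feasible set. -/
noncomputable def SS.rmax (F : Finset (Finset α)) : ℕ := F.sup Finset.card

/-- Size of a smallest feasible set. -/
noncomputable def SS.rmin (F : Finset (Finset α)) : ℕ := sInf (Finset.card '' (F : Set (Finset α)))

/-- The width of a set system. -/
noncomputable def SS.width (F : Finset (Finset α)) : ℕ := SS.rmax F - SS.rmin F

/-- The minimum-cardinality feasible sets. -/
noncomputable def SS.Fmin (F : Finset (Finset α)) : Finset (Finset α) :=
  F.filter (fun X => X.card = SS.rmin F)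

/-- The maximum-cardinality feasible sets. -/
noncomputable def SS.Fmax (F : Finset (Finset α)) : Finset (Finset α) :=
  F.filter (fun X => X.card = SS.rmax F)

/-- The partial-`w` polynomial of a set system with ground set `E`. -/
noncomputable def SS.poly (w : List SS.Op) (E : Finset α) (F : Finset (Finset α)) :
    Polynomial ℤ :=
  ∑ A ∈ E.powerset, (Polynomial.X : Polynomial ℤ) ^ SS.width (SS.wordOn w A F)

/-- A proper set system satisfying the symmetric exchange axiom. -/
noncomputable def SS.IsDeltaMatroid (F : Finset (Finset α)) : Prop :=
  F.Nonempty ∧ ∀ X ∈ F, ∀ Y ∈ F, ∀ u ∈ symmDiff X Y,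
    ∃ v ∈ symmDiff X Y, symmDiff X {u, v} ∈ F

/-- Apply a sequence of single-element twists and loop complementations. -/
noncomputable def SS.seqApply : List (SS.Op × α) → Finset (Finset α) → Finset (Finset α)
  | [], F => F
  | (o, e) :: s, F => SS.seqApply s (SS.opElem o e F)

/-- A set system is vf-safe if every sequence of single-element twists and loop
complementations yields a delta-matroid. -/
noncomputable def SS.VfSafe (F : Finset (Finset α)) : Prop :=
  ∀ s : List (SS.Op × α), SS.IsDeltaMatroid (SS.seqApply s F)

/-- The direct sum of two set systems. -/
noncomputable def SS.dsum (F F' : Finset (Finset α)) : Finset (Finset α) :=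
  (F ×ˢ F').image (fun p => p.1 ∪ p.2)


section Aux
variable {α : Type*} [DecidableEq α]

lemma SS.rmin_le {F : Finset (Finset α)} {X : Finset α} (hX : X ∈ F) :
    SS.rmin F ≤ X.card := Nat.sInf_le ⟨X, by simpa using hX, rfl⟩

lemma SS.le_rmax {F : Finset (Finset α)} {X : Finset α} (hX : X ∈ F) :
    X.card ≤ SS.rmax F := Finset.le_sup hX

lemma SS.rmax_eq {F : Finset (Finset α)} {Y : Finset α} {n : ℕ} (h1 : Y ∈ F)
    (h2 : Y.card = n) (h3 : ∀ Z ∈ F, Z.card ≤ n) : SS.rmax F = n :=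
  le_antisymm (Finset.sup_le h3) (h2 ▸ Finset.le_sup h1)

lemma SS.rmin_eq {F : Finset (Finset α)} {Y : Finset α} {n : ℕ} (h1 : Y ∈ F)
    (h2 : Y.card = n) (h3 : ∀ Z ∈ F, n ≤ Z.card) : SS.rmin F = n :=
  le_antisymm (h2 ▸ SS.rmin_le h1)
    (le_csInf ⟨Y.card, ⟨Y, by simpa using h1, rfl⟩⟩ (by rintro b ⟨Z, hZ, rfl⟩; exact h3 Z (by simpa using hZ)))

lemma symmDiff_singleton_of_mem {e : α} {X : Finset α} (h : e ∈ X) :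
    symmDiff {e} X = X.erase e := by
  ext x; simp [Finset.mem_symmDiff, Finset.mem_erase]
  constructor
  · rintro (⟨rfl, hx⟩ | ⟨h1, h2⟩)
    · exact absurd h hx
    · exact ⟨h2, h1⟩
  · rintro ⟨h1, h2⟩; exact Or.inr ⟨h2, h1⟩

lemma symmDiff_singleton_of_not_mem {e : α} {X : Finset α} (h : e ∉ X) :
    symmDiff {e} X = insert e X := by
  ext x; simp [Finset.mem_symmDiff, Finset.mem_insert]
  constructor
  · rintro (⟨rfl, _⟩ | ⟨h1, _⟩)
    · exact Or.inl rfl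
    · exact Or.inr h1
  · rintro (rfl | h1)
    · exact Or.inl ⟨rfl, h⟩
    · exact Or.inr ⟨h1, fun he => h (he ▸ h1)⟩

end Aux

open SS

theorem stmt15 (F : Finset (Finset α)) (hD : SS.IsDeltaMatroid F) (e : α)
    (hp : ∃ A ∈ SS.Fmin F, e ∈ A) (hq : ∃ B ∈ SS.Fmax F, e ∉ B) :
    SS.width (SS.twist {e} F) = SS.width F + 2 ∧
    SS.width (SS.lc e F) = SS.width F + 1 := by
  obtain ⟨hne, _⟩ := hD
  obtain ⟨A, hA, heA⟩ := hp
  obtain ⟨B, hB, heB⟩ := hq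
  rw [SS.Fmin, Finset.mem_filter] at hA
  rw [SS.Fmax, Finset.mem_filter] at hB
  obtain ⟨hAF, hAcard⟩ := hA
  obtain ⟨hBF, hBcard⟩ := hB
  set m := SS.rmin F with hm
  set M := SS.rmax F with hM
  have hmM : m ≤ M := hAcard ▸ SS.le_rmax hAF
  have hm1 : 1 ≤ m := by
    rw [← hAcard]; exact Finset.card_pos.mpr ⟨e, heA⟩
  -- twist facts
  have htA : A.erase e ∈ SS.twist {e} F := by
    rw [SS.twist, Finset.mem_image]
    exact ⟨A, hAF, symmDiff_singleton_of_mem heA⟩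
  have htB : insert e B ∈ SS.twist {e} F := by
    rw [SS.twist, Finset.mem_image]
    exact ⟨B, hBF, symmDiff_singleton_of_not_mem heB⟩
  have htmax : SS.rmax (SS.twist {e} F) = M + 1 := by
    refine SS.rmax_eq htB (by rw [Finset.card_insert_of_notMem heB, hBcard]) ?_
    intro Z hZ
    rw [SS.twist, Finset.mem_image] at hZ
    obtain ⟨X, hX, rfl⟩ := hZ
    by_cases he : e ∈ X
    · rw [symmDiff_singleton_of_mem he]
      exact le_trans (Finset.card_erase_le) (Nat.le_succ_of_le (SS.le_rmax hX))
    · rw [symmDiff_singleton_of_not_mem he, Finset.card_insert_of_notMem he]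
      exact Nat.succ_le_succ (SS.le_rmax hX)
  have htmin : SS.rmin (SS.twist {e} F) = m - 1 := by
    refine SS.rmin_eq htA (by rw [Finset.card_erase_of_mem heA, hAcard]) ?_
    intro Z hZ
    rw [SS.twist, Finset.mem_image] at hZ
    obtain ⟨X, hX, rfl⟩ := hZ
    by_cases he : e ∈ X
    · rw [symmDiff_singleton_of_mem he, Finset.card_erase_of_mem he]
      exact Nat.sub_le_sub_right (SS.rmin_le hX) 1
    · rw [symmDiff_singleton_of_not_mem he, Finset.card_insert_of_notMem he]
      have := SS.rmin_le hX
      omega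
  -- lc facts
  set img : Finset (Finset α) := (F.filter (fun X => e ∉ X)).image (insert e) with himg
  have hlcmem : ∀ Z, Z ∈ SS.lc e F ↔ (Z ∈ F ∧ Z ∉ img) ∨ (Z ∈ img ∧ Z ∉ F) := by
    intro Z; rw [SS.lc, Finset.mem_symmDiff]
  have hAlc : A ∈ SS.lc e F := by
    rw [hlcmem]
    left
    refine ⟨hAF, fun hAi => ?_⟩
    rw [himg, Finset.mem_image] at hAi
    obtain ⟨X, hX, hXA⟩ := hAi
    rw [Finset.mem_filter] at hX
    have h1 : m ≤ X.card := SS.rmin_le hX.1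
    have h2 : X.card + 1 = m := by
      rw [← Finset.card_insert_of_notMem hX.2, hXA, hAcard]
    omega
  have hBlc : insert e B ∈ SS.lc e F := by
    rw [hlcmem]
    right
    constructor
    · rw [himg, Finset.mem_image]
      exact ⟨B, Finset.mem_filter.mpr ⟨hBF, heB⟩, rfl⟩
    · intro hin
      have := SS.le_rmax hin
      rw [Finset.card_insert_of_notMem heB, hBcard] at this
      omega
  have hlcbound : ∀ Z ∈ SS.lc e F, m ≤ Z.card ∧ Z.card ≤ M + 1 := by
    intro Z hZ
    rw [hlcmem] at hZ
    rcases hZ with ⟨hZF, _⟩ | ⟨hZi, _⟩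
    · exact ⟨SS.rmin_le hZF, Nat.le_succ_of_le (SS.le_rmax hZF)⟩
    · rw [himg, Finset.mem_image] at hZi
      obtain ⟨X, hX, rfl⟩ := hZi
      rw [Finset.mem_filter] at hX
      rw [Finset.card_insert_of_notMem hX.2]
      exact ⟨Nat.le_succ_of_le (SS.rmin_le hX.1), Nat.succ_le_succ (SS.le_rmax hX.1)⟩
  have hlcmax : SS.rmax (SS.lc e F) = M + 1 :=
    SS.rmax_eq hBlc (by rw [Finset.card_insert_of_notMem heB, hBcard])
      (fun Z hZ => (hlcbound Z hZ).2)
  have hlcmin : SS.rmin (SS.lc e F) = m :=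
    SS.rmin_eq hAlc hAcard (fun Z hZ => (hlcbound Z hZ).1)
  constructor
  · rw [SS.width, SS.width, htmax, htmin, ← hm, ← hM]; omega
  · rw [SS.width, SS.width, hlcmax, hlcmin, ← hm, ← hM]; omega
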